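/- Let u, v ∈ ℝ^d be nonzero vectors and suppose real numbers a, b, c satisfy |a − ⟨u,v⟩| ≤ ε, |b − ‖u‖²| ≤ ε‖u‖², |c − ‖v‖²| ≤ ε‖v‖², with b, c > 0 and ε ∈ (0, 1/2). Then |a/√(bc) − ⟨u,v⟩/(‖u‖‖v‖)| ≤ Cε(1 + ‖u‖‖v‖)/(‖u‖‖v‖) for an absolute constant C. -/

import Mathlib

open MeasureTheory ProbabilityTheory Matrix
open scoped NNReal ENNReal

private lemma cosine_aux (p a r q ε : ℝ) (hq : 0 < q) (hε : 0 < ε)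
    (hε2 : ε < 1 / 2) (hp : |p| ≤ q) (ha : |a - p| ≤ ε)
    (hrlb : (1 - ε) * q ≤ r) (hrub : r ≤ (1 + ε) * q) :
    |a / r - p / q| ≤ 2 * ε * (1 + q) / q := by
  have hrpos : 0 < r := lt_of_lt_of_le (by nlinarith) hrlb
  have hrst : |q - r| ≤ ε * q := by
    rw [abs_le]; constructor <;> nlinarith
  have key : a / r - p / q = (a - p) / r + p * (q - r) / (r * q) := by
    field_simp
    ring
  rw [key]
  have t1 : |(a - p) / r| ≤ 2 * ε / q := by
    rw [abs_div, abs_of_pos hrpos, div_le_div_iff₀ hrpos hq]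
    nlinarith [abs_nonneg (a - p)]
  have t2 : |p * (q - r) / (r * q)| ≤ 2 * ε := by
    rw [abs_div, abs_mul, abs_of_pos (by positivity : (0:ℝ) < r * q),
      div_le_iff₀ (by positivity)]
    nlinarith [mul_le_mul hp hrst (abs_nonneg (q - r)) hq.le,
      mul_le_mul_of_nonneg_right hrlb hq.le,
      mul_nonneg (mul_nonneg hε.le (by linarith : (0:ℝ) ≤ 1 - 2 * ε)) (mul_pos hq hq).le]
  calc |(a - p) / r + p * (q - r) / (r * q)|
      ≤ |(a - p) / r| + |p * (q - r) / (r * q)| := abs_add_le _ _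
    _ ≤ 2 * ε / q + 2 * ε := add_le_add t1 t2
    _ = 2 * ε * (1 + q) / q := by field_simp

/-- Deterministic perturbation lemma: if the inner product and the
two squared norms are approximately preserved, then the cosine similarity
a/√(bc) is close to ⟨u,v⟩/(‖u‖‖v‖). -/
theorem cosine_perturbation_lemma :
    ∃ C : ℝ, 0 < C ∧
      ∀ (d : ℕ) (u v : Fin d → ℝ), u ≠ 0 → v ≠ 0 →
        ∀ (a b c ε : ℝ), 0 < ε → ε < 1 / 2 → 0 < b → 0 < c →
          |a - ∑ i, u i * v i| ≤ ε →
          |b - ∑ i, u i ^ 2| ≤ ε * ∑ i, u i ^ 2 →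
          |c - ∑ i, v i ^ 2| ≤ ε * ∑ i, v i ^ 2 →
          |a / Real.sqrt (b * c)
              - (∑ i, u i * v i)
                  / (Real.sqrt (∑ i, u i ^ 2) * Real.sqrt (∑ i, v i ^ 2))|
            ≤ C * ε * (1 + Real.sqrt (∑ i, u i ^ 2) * Real.sqrt (∑ i, v i ^ 2))
                / (Real.sqrt (∑ i, u i ^ 2) * Real.sqrt (∑ i, v i ^ 2)) := by
  refine ⟨2, by norm_num, ?_⟩
  intro d u v hu hv a b c ε hε hε2 hb hc ha hbU hcV
  set U := ∑ i, u i ^ 2 with hUdef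
  set V := ∑ i, v i ^ 2 with hVdef
  set p := ∑ i, u i * v i with hpdef
  have hU : 0 < U := by
    obtain ⟨i, hi⟩ : ∃ i, u i ≠ 0 := by
      by_contra h; push_neg at h; exact hu (funext h)
    exact Finset.sum_pos' (fun j _ => sq_nonneg _)
      ⟨i, Finset.mem_univ i, by positivity⟩
  have hV : 0 < V := by
    obtain ⟨i, hi⟩ : ∃ i, v i ≠ 0 := by
      by_contra h; push_neg at h; exact hv (funext h)
    exact Finset.sum_pos' (fun j _ => sq_nonneg _)
      ⟨i, Finset.mem_univ i, by positivity⟩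
  set s := Real.sqrt U with hsdef
  set t := Real.sqrt V with htdef
  have hs : 0 < s := Real.sqrt_pos.2 hU
  have ht : 0 < t := Real.sqrt_pos.2 hV
  have hs2 : s ^ 2 = U := Real.sq_sqrt hU.le
  have ht2 : t ^ 2 = V := Real.sq_sqrt hV.le
  have hcs : p ^ 2 ≤ U * V := Finset.sum_mul_sq_le_sq_mul_sq Finset.univ u v
  have hp : |p| ≤ s * t := by
    rw [← Real.sqrt_sq_eq_abs]
    calc Real.sqrt (p ^ 2) ≤ Real.sqrt (U * V) := Real.sqrt_le_sqrt hcs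
      _ = s * t := Real.sqrt_mul hU.le V
  set r := Real.sqrt (b * c) with hrdef
  have hbub : b ≤ (1 + ε) * U := by have := abs_le.1 hbU; linarith [this.2]
  have hblb : (1 - ε) * U ≤ b := by have := abs_le.1 hbU; linarith [this.1]
  have hcub : c ≤ (1 + ε) * V := by have := abs_le.1 hcV; linarith [this.2]
  have hclb : (1 - ε) * V ≤ c := by have := abs_le.1 hcV; linarith [this.1]
  have hεq : (0:ℝ) < 1 - ε := by linarith
  have hrub : r ≤ (1 + ε) * (s * t) := by
    have h1 : b * c ≤ ((1 + ε) * (s * t)) ^ 2 := by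
      have h2 : ((1 + ε) * (s * t)) ^ 2 = ((1 + ε) * U) * ((1 + ε) * V) := by
        rw [← hs2, ← ht2]; ring
      rw [h2]
      exact mul_le_mul hbub hcub hc.le (by positivity)
    calc r ≤ Real.sqrt (((1 + ε) * (s * t)) ^ 2) := Real.sqrt_le_sqrt h1
      _ = (1 + ε) * (s * t) := Real.sqrt_sq (by positivity)
  have hrlb : (1 - ε) * (s * t) ≤ r := by
    have h1 : ((1 - ε) * (s * t)) ^ 2 ≤ b * c := by
      have h2 : ((1 - ε) * (s * t)) ^ 2 = ((1 - ε) * U) * ((1 - ε) * V) := by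
        rw [← hs2, ← ht2]; ring
      rw [h2]
      exact mul_le_mul hblb hclb (by positivity) hb.le
    calc (1 - ε) * (s * t) = Real.sqrt (((1 - ε) * (s * t)) ^ 2) :=
          (Real.sqrt_sq (by positivity)).symm
      _ ≤ r := Real.sqrt_le_sqrt h1
  exact cosine_aux p a r (s * t) ε (mul_pos hs ht) hε hε2 hp ha hrlb hrub
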